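/- (Proposition 3, law-level form) Let d ∈ ℕ*, f_0,…,f_{d-1} ≥ 0, f_d = 0, g_0,…,g_d ≥ 0 with f_i + g_i > 0 for i = 1,…,d, let x_0^{in} > 0 and x_i^{in} ≥ 0, let (x_0^ε,…,x_d^ε) solve the rescaled linear ODE system dx_0/dt = -(f_0+g_0)x_0, ε dx_i/dt = f_{i-1}x_{i-1} - (f_i+g_i)x_i with this initial data, and set x̄_0(t) = x_0^{in} exp(-(f_0+g_0)t) and p_i = Π_{j=0}^{i-1} f_j/(f_{j+1}+g_{j+1}). Fix t > 0. If, for each ε > 0, X_0^ε(t) = ε · Z_0^ε with Z_0^ε Poisson of mean x_0^ε(t)/ε, and X_i^ε(t) is Poisson of mean x_i^ε(t) for i = 1,…,d, then as ε → 0: X_0^ε(t) converges in law to the deterministic value x̄_0(t), and for each i = 1,…,d, X_i^ε(t) converges in law to a Poisson random variable with mean p_i x̄_0(t). -/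

import Mathlib

set_option autoImplicit false
set_option maxHeartbeats 1000000

open MeasureTheory Filter

open scoped BigOperators

section auxlemmas
open Real intervalIntegral

noncomputable def pois (m : ℝ) (n : ℕ) : ℝ := Real.exp (-m) * (m ^ n / n.factorial)

lemma hasSum_expSeries (m : ℝ) : HasSum (fun n : ℕ => m ^ n / n.factorial) (Real.exp m) := by
  rw [Real.exp_eq_exp_ℝ]
  exact NormedSpace.expSeries_div_hasSum_exp m

lemma hasSum_moment1 (m : ℝ) :
    HasSum (fun n : ℕ => (n : ℝ) * (m ^ n / n.factorial)) (m * Real.exp m) := by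
  have h : (fun n : ℕ => ((n+1 : ℕ) : ℝ) * (m ^ (n+1) / (n+1).factorial))
      = fun n : ℕ => m * (m ^ n / n.factorial) := by
    funext n
    rw [Nat.factorial_succ]
    push_cast
    field_simp
    ring
  have h0 : HasSum (fun n : ℕ => ((n+1 : ℕ) : ℝ) * (m ^ (n+1) / (n+1).factorial))
      (m * Real.exp m) := by
    rw [h]; exact (hasSum_expSeries m).mul_left m
  have := (hasSum_nat_add_iff (f := fun n : ℕ => (n : ℝ) * (m ^ n / n.factorial)) 1).mp h0
  simpa using this

lemma hasSum_moment2 (m : ℝ) :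
    HasSum (fun n : ℕ => ((n : ℝ))^2 * (m ^ n / n.factorial)) ((m^2 + m) * Real.exp m) := by
  have key : HasSum (fun n : ℕ => ((n : ℝ) * ((n:ℝ) - 1)) * (m ^ n / n.factorial))
      (m^2 * Real.exp m) := by
    have h : (fun n : ℕ => (((n+2 : ℕ) : ℝ) * (((n+2 : ℕ):ℝ) - 1)) * (m ^ (n+2) / (n+2).factorial))
        = fun n : ℕ => m^2 * (m ^ n / n.factorial) := by
      funext n
      rw [Nat.factorial_succ, Nat.factorial_succ]
      push_cast
      field_simp
      ring
    have h0 : HasSum (fun n : ℕ => (((n+2:ℕ) : ℝ) * (((n+2:ℕ):ℝ) - 1)) * (m ^ (n+2) / (n+2).factorial))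
        (m^2 * Real.exp m) := by
      rw [h]; exact (hasSum_expSeries m).mul_left (m^2)
    have := (hasSum_nat_add_iff
      (f := fun n : ℕ => ((n : ℝ) * ((n:ℝ) - 1)) * (m ^ n / n.factorial)) 2).mp h0
    simpa [Finset.sum_range_succ] using this
  have := key.add (hasSum_moment1 m)
  convert this using 1
  · funext n; ring
  · ring

lemma pois_hasSum_one (m : ℝ) : HasSum (pois m) 1 := by
  have := (hasSum_expSeries m).mul_left (Real.exp (-m))
  show HasSum (fun n => pois m n) 1
  simpa [pois, ← Real.exp_add] using this

lemma pois_hasSum_mean (m : ℝ) : HasSum (fun n : ℕ => pois m n * n) m := by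
  have := (hasSum_moment1 m).mul_left (Real.exp (-m))
  have e : Real.exp (-m) * (m * Real.exp m) = m := by
    rw [mul_comm m (Real.exp m), ← mul_assoc, ← Real.exp_add]; simp
  rw [e] at this
  convert this using 1
  · rfl
  funext n; simp [pois]; ring

lemma pois_hasSum_sq (m : ℝ) : HasSum (fun n : ℕ => pois m n * (n:ℝ)^2) (m^2 + m) := by
  have := (hasSum_moment2 m).mul_left (Real.exp (-m))
  have e : Real.exp (-m) * ((m^2 + m) * Real.exp m) = m^2 + m := by
    rw [mul_comm _ (Real.exp m), ← mul_assoc, mul_comm (Real.exp (-m)) (Real.exp m), ← Real.exp_add]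
    simp
  rw [e] at this
  convert this using 1
  · rfl
  funext n; simp [pois]; ring

lemma pois_nonneg {m : ℝ} (hm : 0 ≤ m) (n : ℕ) : 0 ≤ pois m n := by
  unfold pois
  positivity

/-- variance-type identity: `∑ pois m n * (ε n - λ)^2 = ε λ` when `m = λ/ε`. -/
lemma pois_hasSum_var {lam ε : ℝ} (hε : 0 < ε) :
    HasSum (fun n : ℕ => pois (lam/ε) n * (ε * n - lam)^2) (ε * lam) := by
  set m := lam / ε with hm
  have h2 := (pois_hasSum_sq m).mul_left (ε^2)
  have h1 := (pois_hasSum_mean m).mul_left (-(2*ε*lam))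
  have h0 := (pois_hasSum_one m).mul_left (lam^2)
  have := (h2.add h1).add h0
  have hval : ε ^ 2 * (m ^ 2 + m) + -(2 * ε * lam) * m + lam ^ 2 * 1 = ε * lam := by
    rw [hm]; field_simp; ring
  rw [← hval]
  convert this using 1
  · rfl
  funext n; simp only [pois]; ring

/-- Part-1 analytic core: scaled Poisson concentrates. -/
lemma lemA {lam : ℝ} (hlam : 0 < lam) {h : ℝ → ℝ} (hc : Continuous h)
    {C : ℝ} (hC : ∀ y, |h y| ≤ C) :
    Tendsto (fun ε : ℝ => ∑' n : ℕ, pois (lam/ε) n * h (ε * n))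
      (nhdsWithin 0 (Set.Ioi 0)) (nhds (h lam)) := by
  have hC0 : 0 ≤ C := le_trans (abs_nonneg _) (hC 0)
  rw [Metric.tendsto_nhdsWithin_nhds]
  intro η hη
  -- continuity at lam
  obtain ⟨δ, hδ, hδh⟩ := Metric.continuousAt_iff.mp (hc.continuousAt (x := lam)) (η/3) (by linarith)
  set K := (2*C+1)/δ^2 with hK
  have hKpos : 0 < K := by positivity
  refine ⟨min 1 (η/(3*K*lam)), by positivity, ?_⟩
  intro ε hεmem hεdist
  have hε : 0 < ε := hεmem
  set m := lam / ε with hm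
  have hm0 : 0 ≤ m := le_of_lt (by positivity)
  have SP := pois_hasSum_one m
  have SV := pois_hasSum_var (lam := lam) hε
  have Sh : Summable (fun n : ℕ => pois m n * h (ε * n)) := by
    apply Summable.of_norm_bounded (SP.summable.mul_right C)
    intro n
    rw [norm_mul, Real.norm_of_nonneg (pois_nonneg hm0 n)]
    have : ‖h (ε * n)‖ ≤ C := by rw [Real.norm_eq_abs]; exact hC _
    exact mul_le_mul_of_nonneg_left this (pois_nonneg hm0 n)
  -- the difference as a tsum
  have key : ∑' n : ℕ, pois m n * h (ε * n) - h lam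
      = ∑' n : ℕ, pois m n * (h (ε * n) - h lam) := by
    have H := Sh.hasSum.sub ((pois_hasSum_one m).mul_right (h lam))
    have e1 : (fun n : ℕ => pois m n * (h (ε*n) - h lam))
        = fun n : ℕ => pois m n * h (ε*n) - pois m n * h lam := funext fun n => mul_sub _ _ _
    rw [e1, H.tsum_eq, one_mul]
  rw [Real.dist_eq, key]
  set F := fun n : ℕ => pois m n * (h (ε * n) - h lam) with hF
  set G := fun n : ℕ => pois m n * (η/3) + K * (pois m n * (ε * n - lam)^2) with hG
  have SG : HasSum G (1 * (η/3) + K * (ε * lam)) := (SP.mul_right (η/3)).add (SV.mul_left K)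
  have hFG : ∀ n, ‖F n‖ ≤ G n := by
    intro n
    have hp := pois_nonneg hm0 n
    rw [hF, hG]
    simp only [norm_mul, Real.norm_of_nonneg hp, Real.norm_eq_abs]
    rcases lt_or_ge (|ε * n - lam|) δ with hcase | hcase
    · have h1 : |h (ε * n) - h lam| ≤ η/3 := by
        have := hδh (x := ε * n) (by rwa [Real.dist_eq])
        rw [Real.dist_eq] at this
        exact this.le
      have h2 : 0 ≤ K * (pois m n * (ε * n - lam)^2) := by positivity
      nlinarith [mul_le_mul_of_nonneg_left h1 hp]
    · have h1 : |h (ε * n) - h lam| ≤ K * (ε * n - lam)^2 := by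
        have h2 : |h (ε * n) - h lam| ≤ 2*C + 1 := by
          have := abs_sub (h (ε * n)) (h lam)
          have ha := hC (ε * n); have hb := hC lam
          calc |h (ε * n) - h lam| ≤ |h (ε * n)| + |h lam| := abs_sub _ _
            _ ≤ 2*C + 1 := by linarith
        have h3 : 2*C + 1 ≤ K * (ε * n - lam)^2 := by
          have hδ2 : δ^2 ≤ (ε * n - lam)^2 := by
            rw [← sq_abs (ε * n - lam)]
            exact pow_le_pow_left₀ hδ.le hcase 2
          have : K * δ^2 = 2*C+1 := by rw [hK]; field_simp
          nlinarith
        linarith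
      have h2 : 0 ≤ pois m n * (η/3) := by positivity
      nlinarith [mul_le_mul_of_nonneg_left h1 hp]
  have SFn : Summable fun n => ‖F n‖ :=
    Summable.of_nonneg_of_le (fun n => norm_nonneg _) hFG SG.summable
  have step : |∑' n, F n| ≤ 1 * (η/3) + K * (ε * lam) := by
    calc |∑' n, F n| = ‖∑' n, F n‖ := (Real.norm_eq_abs _).symm
      _ ≤ ∑' n, ‖F n‖ := norm_tsum_le_tsum_norm SFn
      _ ≤ ∑' n, G n := Summable.tsum_le_tsum hFG SFn SG.summable
      _ = 1 * (η/3) + K * (ε * lam) := SG.tsum_eq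
  have hεsmall : ε < η/(3*K*lam) := lt_of_lt_of_le (by
      have : dist ε 0 = ε := by rw [Real.dist_eq, sub_zero, abs_of_pos hε]
      rw [this] at hεdist; exact hεdist) (min_le_right _ _)
  have hKel : K * (ε * lam) < η/3 := by
    have h3 : ε * (3*K*lam) < η := (lt_div_iff₀ (by positivity : (0:ℝ) < 3*K*lam)).mp hεsmall
    nlinarith
  calc |∑' n, F n| ≤ 1 * (η/3) + K * (ε * lam) := step
    _ < η := by linarith

noncomputable def poisp (m : ℝ) (n : ℕ) : ℝ := max (pois m n) 0
lemma lemBp {L : ℝ} {h : ℝ → ℝ} (hc : Continuous h) {C : ℝ} (hC : ∀ y, |h y| ≤ C)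
    {F : Filter ℝ} {lam : ℝ → ℝ} (hlam : Tendsto lam F (nhds L)) :
    Tendsto (fun ε => ∑' n : ℕ, poisp (lam ε) n * h n) F
      (nhds (∑' n : ℕ, poisp L n * h n)) := by
  have hC0 : 0 ≤ C := le_trans (abs_nonneg _) (hC 0)
  set M := |L| + 1 with hM
  set clamp : ℝ → ℝ := fun y => max (min y (L+1)) (L-1) with hclamp
  have hclampcont : Continuous clamp := (continuous_id.min continuous_const).max continuous_const
  have hclampL : clamp L = L := by
    rw [hclamp]; simp only
    rw [min_eq_left (by linarith), max_eq_left (by linarith)]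
  have hlam' : Tendsto (fun ε => clamp (lam ε)) F (nhds L) := by
    have := (hclampcont.tendsto L).comp hlam
    rwa [hclampL] at this
  have hbd : ∀ y : ℝ, |clamp y| ≤ M := by
    intro y
    have h1 : L - 1 ≤ clamp y := le_max_right _ _
    have h2 : clamp y ≤ L + 1 := max_le (min_le_right _ _) (by linarith)
    rw [abs_le]
    exact ⟨by linarith [neg_abs_le L], by linarith [le_abs_self L]⟩
  have main : Tendsto (fun ε => ∑' n : ℕ, poisp (clamp (lam ε)) n * h n) F
      (nhds (∑' n : ℕ, poisp L n * h n)) := by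
    apply tendsto_tsum_of_dominated_convergence
      (bound := fun n : ℕ => Real.exp M * (M ^ n / n.factorial) * C)
    · exact ((hasSum_expSeries M).mul_left (Real.exp M)).summable.mul_right C
    · intro n
      have hcont : Continuous fun y : ℝ => poisp y n * h n := by
        unfold poisp pois
        apply Continuous.mul ?_ continuous_const
        apply Continuous.max ?_ continuous_const
        fun_prop
      exact (hcont.tendsto L).comp hlam'
    · refine Eventually.of_forall fun ε => fun n => ?_
      set y := clamp (lam ε) with hy
      have hyM : |y| ≤ M := hbd _
      have hM0 : 0 < M := by positivity
      rw [norm_mul, Real.norm_eq_abs, Real.norm_eq_abs]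
      have h1 : |poisp y n| ≤ Real.exp M * (M ^ n / n.factorial) := by
        have hle : |poisp y n| ≤ |pois y n| := by
          unfold poisp
          rcases le_total (pois y n) 0 with hh | hh
          · rw [max_eq_right hh]; simpa using abs_nonneg (pois y n)
          · rw [max_eq_left hh]
        refine le_trans hle ?_
        unfold pois
        rw [abs_mul, abs_div, abs_pow, abs_of_pos (Real.exp_pos _), Nat.abs_cast]
        have e1 : Real.exp (-y) ≤ Real.exp M := by
          apply Real.exp_le_exp.mpr
          cases' abs_le.mp hyM with hl hr; linarith
        have e2 : |y| ^ n / (n.factorial : ℝ) ≤ M ^ n / n.factorial := by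
          gcongr
        calc Real.exp (-y) * (|y| ^ n / n.factorial)
            ≤ Real.exp M * (|y| ^ n / n.factorial) := by
              apply mul_le_mul_of_nonneg_right e1 (by positivity)
          _ ≤ Real.exp M * (M ^ n / n.factorial) := by
              apply mul_le_mul_of_nonneg_left e2 (Real.exp_pos _).le
      exact mul_le_mul h1 (hC _) (abs_nonneg _) (by positivity)
  refine Tendsto.congr' ?_ main
  have : ∀ᶠ ε in F, |lam ε - L| < 1 := by
    have := Metric.tendsto_nhds.mp hlam 1 one_pos
    simpa [Real.dist_eq] using this
  filter_upwards [this] with ε hε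
  have : clamp (lam ε) = lam ε := by
    rw [hclamp]; simp only
    rw [min_eq_left (by cases' abs_lt.mp hε with a b; linarith),
        max_eq_left (by cases' abs_lt.mp hε with a b; linarith)]
  rw [this]

lemma int_eq_tsum {Ω : Type} [MeasurableSpace Ω] (μ : Measure Ω) [IsProbabilityMeasure μ]
    (Y : Ω → ℕ) (hY : Measurable Y) (q : ℕ → ℝ) (hq : ∀ n, 0 ≤ q n)
    (hlaw : ∀ n : ℕ, μ {ω | Y ω = n} = ENNReal.ofReal (q n))
    (h' : ℕ → ℝ) (C : ℝ) (hC : ∀ n, |h' n| ≤ C) :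
    ∫ ω, h' (Y ω) ∂μ = ∑' n : ℕ, q n * h' n := by
  haveI : IsProbabilityMeasure (μ.map Y) := Measure.isProbabilityMeasure_map hY.aemeasurable
  have hmeas : Measurable h' := Measurable.of_discrete
  have hmap : ∫ ω, h' (Y ω) ∂μ = ∫ n, h' n ∂(μ.map Y) :=
    (integral_map hY.aemeasurable hmeas.aestronglyMeasurable).symm
  have hint : Integrable h' (μ.map Y) := by
    refine (integrable_const C).mono' hmeas.aestronglyMeasurable ?_
    exact ae_of_all _ fun n => by rw [Real.norm_eq_abs]; exact hC n
  rw [hmap, integral_countable' hint]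
  apply tsum_congr
  intro n
  have : (μ.map Y) {n} = ENNReal.ofReal (q n) := by
    rw [Measure.map_apply hY (measurableSet_singleton n)]
    have : Y ⁻¹' {n} = {ω | Y ω = n} := by ext ω; simp
    rw [this, hlaw]
  rw [measureReal_def, this, ENNReal.toReal_ofReal (hq n), smul_eq_mul]

lemma slow_sol {a : ℝ} {z : ℝ → ℝ} (hz : ∀ s : ℝ, 0 ≤ s → HasDerivAt z (-a * z s) s)
    {s : ℝ} (hs : 0 ≤ s) : z s = z 0 * Real.exp (-a * s) := by
  set F : ℝ → ℝ := fun u => z u * Real.exp (a * u) with hF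
  have hder : ∀ u ∈ Set.Ico (0:ℝ) s, HasDerivWithinAt F 0 (Set.Ici u) u := by
    intro u hu
    have h1 : HasDerivAt (fun v => Real.exp (a * v)) (Real.exp (a * u) * (a * 1)) u :=
      ((hasDerivAt_id u).const_mul a).exp
    have h2 := (hz u hu.1).mul h1
    have : -a * z u * Real.exp (a * u) + z u * (Real.exp (a * u) * (a * 1)) = 0 := by ring
    rw [this] at h2
    exact h2.hasDerivWithinAt
  have hcont : ContinuousOn F (Set.Icc 0 s) := by
    intro u hu
    have h1 : HasDerivAt (fun v => Real.exp (a * v)) (Real.exp (a * u) * (a * 1)) u :=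
      ((hasDerivAt_id u).const_mul a).exp
    exact (((hz u hu.1).mul h1).continuousAt).continuousWithinAt
  have := constant_of_has_deriv_right_zero hcont hder s (Set.right_mem_Icc.mpr hs)
  have hFs : z s * Real.exp (a * s) = z 0 := by simpa [hF] using this
  have hexp : Real.exp (a * s) ≠ 0 := Real.exp_ne_zero _
  rw [neg_mul, Real.exp_neg, ← hFs]
  field_simp

lemma fast_est {a b ε : ℝ} (ha : 0 < a) (hb : 0 ≤ b) (hε : 0 < ε)
    {y z : ℝ → ℝ}
    (hy : ∀ u : ℝ, 0 ≤ u → ContinuousAt y u)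
    (hz : ∀ s : ℝ, 0 ≤ s → HasDerivAt z ((1/ε) * (b * y s - a * z s)) s)
    {s δ D L η : ℝ} (hs : 0 < s) (hδ : 0 ≤ δ) (hδs : δ ≤ s)
    (hD : ∀ u, 0 ≤ u → u ≤ s → |y u - L| ≤ D)
    (hη : ∀ u, s - δ ≤ u → u ≤ s → |y u - L| ≤ η) :
    |z s - (b/a) * L| ≤ Real.exp (-(a/ε)*s) * |z 0 - (b/a)*L|
      + (b/a) * (D * Real.exp (-(a/ε)*δ) + η) := by
  set ρ := a / ε with hρ
  have hρpos : 0 < ρ := div_pos ha hε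
  have hD0 : 0 ≤ D := le_trans (abs_nonneg _) (hD 0 le_rfl hs.le)
  have hη0 : 0 ≤ η := le_trans (abs_nonneg _) (hη s (by linarith) le_rfl)
  -- continuity of the integrand pieces
  have hycont : ContinuousOn y (Set.Icc 0 s) := fun u hu => (hy u hu.1).continuousWithinAt
  -- FTC for W u = z u * exp (ρ u)
  have hW : ∀ u ∈ Set.uIcc (0:ℝ) s,
      HasDerivAt (fun v => z v * Real.exp (ρ*v)) (Real.exp (ρ*u) * ((b/ε) * y u)) u := by
    intro u hu
    rw [Set.uIcc_of_le hs.le] at hu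
    have h1 : HasDerivAt (fun v => Real.exp (ρ * v)) (Real.exp (ρ * u) * (ρ * 1)) u :=
      ((hasDerivAt_id u).const_mul ρ).exp
    have h2 := (hz u hu.1).mul h1
    have heq : (1/ε) * (b * y u - a * z u) * Real.exp (ρ*u) + z u * (Real.exp (ρ*u) * (ρ*1))
        = Real.exp (ρ*u) * ((b/ε) * y u) := by
      rw [hρ]; field_simp; ring
    rw [heq] at h2
    exact h2
  have hIcont : ContinuousOn (fun u => Real.exp (ρ*u) * ((b/ε) * y u)) (Set.Icc 0 s) := by
    apply ContinuousOn.mul (by fun_prop)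
    exact ContinuousOn.mul continuousOn_const hycont
  have hIint : IntervalIntegrable (fun u => Real.exp (ρ*u) * ((b/ε) * y u)) volume 0 s := by
    apply ContinuousOn.intervalIntegrable
    rwa [Set.uIcc_of_le hs.le]
  have hFTC := integral_eq_sub_of_hasDerivAt hW hIint
  -- same for the constant L
  have hWL : ∀ u ∈ Set.uIcc (0:ℝ) s,
      HasDerivAt (fun v => (b*L/a) * Real.exp (ρ*v)) (Real.exp (ρ*u) * ((b/ε) * L)) u := by
    intro u _
    have h1 : HasDerivAt (fun v => Real.exp (ρ * v)) (Real.exp (ρ * u) * (ρ * 1)) u :=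
      ((hasDerivAt_id u).const_mul ρ).exp
    have h2 := h1.const_mul (b*L/a)
    have heq : (b*L/a) * (Real.exp (ρ*u) * (ρ*1)) = Real.exp (ρ*u) * ((b/ε) * L) := by
      rw [hρ]; field_simp
    rwa [heq] at h2
  have hILint : IntervalIntegrable (fun u => Real.exp (ρ*u) * ((b/ε) * L)) volume 0 s := by
    apply ContinuousOn.intervalIntegrable; fun_prop
  have hFTCL := integral_eq_sub_of_hasDerivAt hWL hILint
  rw [mul_zero, Real.exp_zero, mul_one] at hFTC hFTCL
  -- the difference integral
  set I := ∫ u in (0:ℝ)..s, Real.exp (ρ*u) * ((b/ε) * (y u - L)) with hI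
  have hIeq : (z s - (b/a)*L) * Real.exp (ρ*s) = (z 0 - (b/a)*L) + I := by
    have hsub : I = (z s * Real.exp (ρ*s) - z 0)
        - ((b*L/a) * Real.exp (ρ*s) - (b*L/a)) := by
      rw [hI, ← hFTC, ← hFTCL, ← integral_sub hIint hILint]
      congr 1; funext u; ring
    have hL : (b/a)*L = b*L/a := by ring
    rw [hL]
    linarith [hsub]
  -- split the integral
  set c := s - δ with hc
  have hc0 : 0 ≤ c := by linarith
  have hcs : c ≤ s := by linarith
  set F : ℝ → ℝ := fun u => Real.exp (ρ*u) * ((b/ε) * (y u - L)) with hFdef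
  have hfint : IntervalIntegrable F volume 0 s := by
    have := hIint.sub hILint
    have he : (fun u => Real.exp (ρ*u) * ((b/ε) * y u) - Real.exp (ρ*u) * ((b/ε) * L)) = F := by
      funext u; rw [hFdef]; ring
    rwa [he] at this
  have hIF : I = ∫ u in (0:ℝ)..s, F u := by
    rw [hI]
  have hsub1 : Set.uIcc (0:ℝ) c ⊆ Set.uIcc (0:ℝ) s := by
    rw [Set.uIcc_of_le hc0, Set.uIcc_of_le hs.le]
    exact Set.Icc_subset_Icc le_rfl hcs
  have hsub2 : Set.uIcc c s ⊆ Set.uIcc (0:ℝ) s := by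
    rw [Set.uIcc_of_le hcs, Set.uIcc_of_le hs.le]
    exact Set.Icc_subset_Icc hc0 le_rfl
  have hint1 : IntervalIntegrable F volume 0 c := hfint.mono_set hsub1
  have hint2 : IntervalIntegrable F volume c s := hfint.mono_set hsub2
  have hsplit : I = (∫ u in (0:ℝ)..c, F u) + ∫ u in c..s, F u := by
    rw [hIF, ← integral_add_adjacent_intervals hint1 hint2]
  -- exact value of the exponential-weight integrals
  have hGint : ∀ K p q : ℝ, (∫ u in p..q, Real.exp (ρ*u) * ((b/ε)*K))
      = (b*K/a) * Real.exp (ρ*q) - (b*K/a) * Real.exp (ρ*p) := by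
    intro K p q
    have hWK : ∀ u ∈ Set.uIcc p q,
        HasDerivAt (fun v => (b*K/a) * Real.exp (ρ*v)) (Real.exp (ρ*u) * ((b/ε) * K)) u := by
      intro u _
      have h1 : HasDerivAt (fun v => Real.exp (ρ * v)) (Real.exp (ρ * u) * (ρ * 1)) u :=
        ((hasDerivAt_id u).const_mul ρ).exp
      have h2 := h1.const_mul (b*K/a)
      have heq : (b*K/a) * (Real.exp (ρ*u) * (ρ*1)) = Real.exp (ρ*u) * ((b/ε) * K) := by
        rw [hρ]; field_simp
      rwa [heq] at h2
    exact integral_eq_sub_of_hasDerivAt hWK (by apply Continuous.intervalIntegrable; fun_prop)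
  -- bound the two pieces
  have hbε : 0 ≤ b / ε := by positivity
  have hbound1 : ‖∫ u in (0:ℝ)..c, F u‖ ≤ (b*D/a) * Real.exp (ρ*c) - (b*D/a) := by
    have hae : ∀ᵐ u ∂(volume.restrict (Set.uIoc (0:ℝ) c)),
        ‖F u‖ ≤ Real.exp (ρ*u) * ((b/ε)*D) := by
      refine (ae_restrict_mem measurableSet_uIoc).mono fun u hu => ?_
      rw [Set.uIoc_of_le hc0] at hu
      rw [hFdef]
      simp only [norm_mul, Real.norm_eq_abs, abs_of_pos (Real.exp_pos _)]
      have : |y u - L| ≤ D := hD u hu.1.le (le_trans hu.2 hcs)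
      have hh : |b/ε| * |y u - L| ≤ (b/ε) * D := by
        rw [abs_of_nonneg hbε]
        exact mul_le_mul_of_nonneg_left this hbε
      exact mul_le_mul_of_nonneg_left hh (Real.exp_pos _).le
    have := norm_integral_le_abs_of_norm_le hae
      (by apply Continuous.intervalIntegrable; fun_prop)
    rw [hGint D 0 c] at this
    have hval : (b*D/a) * Real.exp (ρ*0) = b*D/a := by simp
    rw [hval] at this
    have hpos : 0 ≤ (b*D/a) * Real.exp (ρ*c) - (b*D/a) := by
      have h1 : (1:ℝ) ≤ Real.exp (ρ*c) := by
        rw [← Real.exp_zero]; exact Real.exp_le_exp.mpr (by positivity)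
      nlinarith [div_nonneg (mul_nonneg hb hD0) ha.le]
    rwa [abs_of_nonneg hpos] at this
  have hbound2 : ‖∫ u in c..s, F u‖ ≤ (b*η/a) * Real.exp (ρ*s) - (b*η/a) * Real.exp (ρ*c) := by
    have hae : ∀ᵐ u ∂(volume.restrict (Set.uIoc c s)),
        ‖F u‖ ≤ Real.exp (ρ*u) * ((b/ε)*η) := by
      refine (ae_restrict_mem measurableSet_uIoc).mono fun u hu => ?_
      rw [Set.uIoc_of_le hcs] at hu
      rw [hFdef]
      simp only [norm_mul, Real.norm_eq_abs, abs_of_pos (Real.exp_pos _)]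
      have : |y u - L| ≤ η := hη u hu.1.le hu.2
      have hh : |b/ε| * |y u - L| ≤ (b/ε) * η := by
        rw [abs_of_nonneg hbε]
        exact mul_le_mul_of_nonneg_left this hbε
      exact mul_le_mul_of_nonneg_left hh (Real.exp_pos _).le
    have := norm_integral_le_abs_of_norm_le hae
      (by apply Continuous.intervalIntegrable; fun_prop)
    rw [hGint η c s] at this
    have hpos : 0 ≤ (b*η/a) * Real.exp (ρ*s) - (b*η/a) * Real.exp (ρ*c) := by
      have h1 : Real.exp (ρ*c) ≤ Real.exp (ρ*s) :=
        Real.exp_le_exp.mpr (mul_le_mul_of_nonneg_left hcs hρpos.le)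
      nlinarith [div_nonneg (mul_nonneg hb hη0) ha.le]
    rwa [abs_of_nonneg hpos] at this
  -- assemble
  have hIbound : |I| ≤ ((b*D/a) * Real.exp (ρ*c) - (b*D/a))
      + ((b*η/a) * Real.exp (ρ*s) - (b*η/a) * Real.exp (ρ*c)) := by
    rw [hsplit]
    calc |(∫ u in (0:ℝ)..c, F u) + ∫ u in c..s, F u|
        ≤ |∫ u in (0:ℝ)..c, F u| + |∫ u in c..s, F u| := abs_add_le _ _
      _ ≤ _ := add_le_add hbound1 hbound2
  have hEneg : Real.exp (-(ρ*s)) * Real.exp (ρ*c) = Real.exp (-(ρ*δ)) := by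
    rw [← Real.exp_add]; congr 1; rw [hc]; ring
  have hEone : Real.exp (-(ρ*s)) * Real.exp (ρ*s) = 1 := by
    rw [← Real.exp_add]; simp
  have hzeq : z s - (b/a)*L = Real.exp (-(ρ*s)) * (z 0 - (b/a)*L) + Real.exp (-(ρ*s)) * I := by
    linear_combination Real.exp (-(ρ*s)) * hIeq - (z s - (b/a)*L) * hEone
  have hEpos : 0 < Real.exp (-(ρ*s)) := Real.exp_pos _
  have habs : |z s - (b/a)*L| ≤ Real.exp (-(ρ*s)) * |z 0 - (b/a)*L|
      + Real.exp (-(ρ*s)) * |I| := by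
    rw [hzeq]
    calc |Real.exp (-(ρ*s)) * (z 0 - (b/a)*L) + Real.exp (-(ρ*s)) * I|
        ≤ |Real.exp (-(ρ*s)) * (z 0 - (b/a)*L)| + |Real.exp (-(ρ*s)) * I| := abs_add_le _ _
      _ = Real.exp (-(ρ*s)) * |z 0 - (b/a)*L| + Real.exp (-(ρ*s)) * |I| := by
          rw [abs_mul, abs_mul, abs_of_pos hEpos]
  have hfinal : Real.exp (-(ρ*s)) * |I| ≤ (b/a) * (D * Real.exp (-(a/ε)*δ) + η) := by
    have h2 := mul_le_mul_of_nonneg_left hIbound hEpos.le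
    have hbDa : 0 ≤ b*D/a := div_nonneg (mul_nonneg hb hD0) ha.le
    have hbηa : 0 ≤ b*η/a := div_nonneg (mul_nonneg hb hη0) ha.le
    have hEc : 0 < Real.exp (ρ*c) := Real.exp_pos _
    have hEd : 0 < Real.exp (-(ρ*δ)) := Real.exp_pos _
    have hρδ : -(a/ε)*δ = -(ρ*δ) := by rw [hρ]; ring
    rw [hρδ]
    have expand : Real.exp (-(ρ*s)) * (((b*D/a) * Real.exp (ρ*c) - (b*D/a))
        + ((b*η/a) * Real.exp (ρ*s) - (b*η/a) * Real.exp (ρ*c)))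
        ≤ (b/a) * (D * Real.exp (-(ρ*δ)) + η) := by
      have e1 : Real.exp (-(ρ*s)) * ((b*D/a) * Real.exp (ρ*c)) = (b*D/a) * Real.exp (-(ρ*δ)) := by
        linear_combination (b*D/a) * hEneg
      have e2 : Real.exp (-(ρ*s)) * ((b*η/a) * Real.exp (ρ*s)) = b*η/a := by
        linear_combination (b*η/a) * hEone
      have heq : Real.exp (-(ρ*s)) * (((b*D/a) * Real.exp (ρ*c) - (b*D/a))
          + ((b*η/a) * Real.exp (ρ*s) - (b*η/a) * Real.exp (ρ*c)))
          = (b*D/a) * Real.exp (-(ρ*δ)) + (b*η/a) - Real.exp (-(ρ*s))*(b*D/a)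
            - Real.exp (-(ρ*s))*((b*η/a)*Real.exp (ρ*c)) := by
        linear_combination e1 + e2
      have e3 : (b/a) * (D * Real.exp (-(ρ*δ)) + η) = (b*D/a) * Real.exp (-(ρ*δ)) + (b*η/a) := by
        ring
      rw [heq, e3]
      linarith [mul_nonneg hEpos.le hbDa, mul_nonneg hEpos.le (mul_nonneg hbηa hEc.le)]
    exact le_trans h2 expand
  have hρs : -(a/ε)*s = -(ρ*s) := by rw [hρ]; ring
  rw [hρs]
  linarith [habs, hfinal]

lemma exp_vanish {a c : ℝ} (ha : 0 < a) (hc : 0 < c) :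
    Tendsto (fun ε : ℝ => Real.exp (-(a/ε)*c)) (nhdsWithin 0 (Set.Ioi 0)) (nhds 0) := by
  have h1 : Tendsto (fun ε : ℝ => a/ε) (nhdsWithin 0 (Set.Ioi 0)) atTop := by
    have := tendsto_inv_nhdsGT_zero (𝕜 := ℝ)
    have h2 := this.const_mul_atTop ha
    simpa [div_eq_mul_inv] using h2
  have h3 : Tendsto (fun ε : ℝ => (a/ε)*c) (nhdsWithin 0 (Set.Ioi 0)) atTop :=
    h1.atTop_mul_const hc
  exact (Real.tendsto_exp_neg_atTop_nhds_zero.comp h3).congr (fun ε => by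
    simp only [Function.comp_apply]; congr 1; ring)

end auxlemmas

lemma small_aux {p η : ℝ} (hp : 0 ≤ p) (hη : 0 < η) : p * (η/(3*(p+1))) ≤ η/3 := by
  have hq : 0 ≤ η/(3*(p+1)) := by positivity
  have heq : η/3 = (p+1) * (η/(3*(p+1))) := by field_simp
  rw [heq]
  exact mul_le_mul_of_nonneg_right (by linarith) hq

/-- Proposition 3, law-level form: at a fixed time `t > 0`, in the linear
stochastic model, the scaled quiescent population converges in law to the deterministic
limit `x̄₀(t)` and each growing compartment converges in law to a Poisson variable of
mean `pᵢ x̄₀(t)` as `ε → 0`. -/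
theorem stmt18
    (d : ℕ) (hd : 1 ≤ d) (f g : ℕ → ℝ)
    (hf : ∀ j, j ≤ d - 1 → 0 ≤ f j) (hfd : f d = 0)
    (hg : ∀ j, j ≤ d → 0 ≤ g j)
    (hfg : ∀ i, 1 ≤ i → i ≤ d → 0 < f i + g i)
    (x0in : ℝ) (hx0in : 0 < x0in) (xin : ℕ → ℝ) (hxin : ∀ i, 1 ≤ i → i ≤ d → 0 ≤ xin i)
    -- for each ε > 0, (x ε) is the solution of the rescaled linear ODE system
    (x : ℝ → ℝ → ℕ → ℝ)
    (hinit0 : ∀ ε : ℝ, 0 < ε → x ε 0 0 = x0in)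
    (hinit : ∀ ε : ℝ, 0 < ε → ∀ i, 1 ≤ i → i ≤ d → x ε 0 i = xin i)
    (hslow : ∀ ε : ℝ, 0 < ε → ∀ s : ℝ, 0 ≤ s →
      HasDerivAt (fun u => x ε u 0) (-(f 0 + g 0) * x ε s 0) s)
    (hfast : ∀ ε : ℝ, 0 < ε → ∀ s : ℝ, 0 ≤ s → ∀ i, 1 ≤ i → i ≤ d →
      HasDerivAt (fun u => x ε u i)
        ((1 / ε) * (f (i - 1) * x ε s (i - 1) - (f i + g i) * x ε s i)) s)
    -- fixed observation time
    (t : ℝ) (ht : 0 < t)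
    -- the random variables
    (Ω : Type) [MeasurableSpace Ω] (μ : ℝ → Measure Ω)
    (hprob : ∀ ε : ℝ, 0 < ε → IsProbabilityMeasure (μ ε))
    (Z0 : ℝ → Ω → ℕ) (X : ℕ → ℝ → Ω → ℕ)
    (hmeas0 : ∀ ε : ℝ, 0 < ε → Measurable (Z0 ε))
    (hmeas : ∀ i, 1 ≤ i → i ≤ d → ∀ ε : ℝ, 0 < ε → Measurable (X i ε))
    -- X₀^ε(t) = ε Z₀^ε with Z₀^ε Poisson of mean x₀^ε(t)/ε
    (hlaw0 : ∀ ε : ℝ, 0 < ε → ∀ n : ℕ,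
      μ ε {ω | Z0 ε ω = n} =
        ENNReal.ofReal (Real.exp (-(x ε t 0 / ε)) * (x ε t 0 / ε) ^ n / Nat.factorial n))
    -- Xᵢ^ε(t) Poisson of mean xᵢ^ε(t)
    (hlaw : ∀ i, 1 ≤ i → i ≤ d → ∀ ε : ℝ, 0 < ε → ∀ n : ℕ,
      μ ε {ω | X i ε ω = n} =
        ENNReal.ofReal (Real.exp (-(x ε t i)) * (x ε t i) ^ n / Nat.factorial n)) :
    -- X₀^ε(t) = ε Z₀^ε converges in law to the deterministic value x̄₀(t)
    (∀ h : ℝ → ℝ, Continuous h → (∃ C : ℝ, ∀ y : ℝ, |h y| ≤ C) →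
      Tendsto (fun ε : ℝ => ∫ ω, h (ε * (Z0 ε ω : ℝ)) ∂(μ ε))
        (nhdsWithin 0 (Set.Ioi 0))
        (nhds (h (x0in * Real.exp (-(f 0 + g 0) * t))))) ∧
    -- Xᵢ^ε(t) converges in law to a Poisson variable of mean pᵢ x̄₀(t)
    (∀ i, 1 ≤ i → i ≤ d → ∀ h : ℝ → ℝ, Continuous h → (∃ C : ℝ, ∀ y : ℝ, |h y| ≤ C) →
      Tendsto (fun ε : ℝ => ∫ ω, h ((X i ε ω : ℝ)) ∂(μ ε))
        (nhdsWithin 0 (Set.Ioi 0))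
        (nhds (∑' n : ℕ,
          (Real.exp (-((∏ j ∈ Finset.range i, f j / (f (j + 1) + g (j + 1)))
              * (x0in * Real.exp (-(f 0 + g 0) * t))))
            * ((∏ j ∈ Finset.range i, f j / (f (j + 1) + g (j + 1)))
              * (x0in * Real.exp (-(f 0 + g 0) * t))) ^ n / Nat.factorial n)
          * h n))) := by
  have hf0 : 0 ≤ f 0 := hf 0 (Nat.zero_le _)
  have hg0 : 0 ≤ g 0 := hg 0 (Nat.zero_le _)
  set lam := x0in * Real.exp (-(f 0 + g 0) * t) with hlamdef
  have hlampos : 0 < lam := mul_pos hx0in (Real.exp_pos _)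
  have hx0 : ∀ ε : ℝ, 0 < ε → ∀ s : ℝ, 0 ≤ s →
      x ε s 0 = x0in * Real.exp (-(f 0 + g 0) * s) := by
    intro ε hε s hs
    have h2 := slow_sol (a := f 0 + g 0) (z := fun u => x ε u 0)
      (fun u hu => hslow ε hε u hu) hs
    rw [h2, hinit0 ε hε]
  have hcontx : ∀ ε : ℝ, 0 < ε → ∀ j, j ≤ d → ∀ u : ℝ, 0 ≤ u →
      ContinuousAt (fun v => x ε v j) u := by
    intro ε hε j hj u hu
    rcases Nat.eq_zero_or_pos j with rfl | hj1
    · exact (hslow ε hε u hu).continuousAt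
    · exact (hfast ε hε u hu j hj1 hj).continuousAt
  set L : ℕ → ℝ := fun i => (∏ j ∈ Finset.range i, f j / (f (j + 1) + g (j + 1))) * lam
    with hLdef
  have hLnn : ∀ i, i ≤ d → 0 ≤ L i := by
    intro i hid
    rw [hLdef]
    apply mul_nonneg _ hlampos.le
    apply Finset.prod_nonneg
    intro j hj
    rw [Finset.mem_range] at hj
    have hj1 : j + 1 ≤ d := by omega
    exact div_nonneg (hf j (by omega)) (hfg (j+1) (by omega) hj1).le
  -- main induction: uniform bound and local-uniform convergence near t
  have key : ∀ i, i ≤ d →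
      (∃ C, 0 ≤ C ∧ ∀ ε : ℝ, 0 < ε → ∀ s, 0 ≤ s → s ≤ t → |x ε s i| ≤ C) ∧
      (∀ η : ℝ, 0 < η → ∃ δ, 0 < δ ∧ δ ≤ t ∧
        ∀ᶠ ε in nhdsWithin (0:ℝ) (Set.Ioi 0),
          ∀ s, t - δ ≤ s → s ≤ t → |x ε s i - L i| ≤ η) := by
    intro i
    induction i with
    | zero =>
      intro _
      constructor
      · refine ⟨x0in, hx0in.le, ?_⟩
        intro ε hε s hs0 hst
        rw [hx0 ε hε s hs0, abs_mul, abs_of_pos hx0in, abs_of_pos (Real.exp_pos _)]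
        have h1 : Real.exp (-(f 0 + g 0) * s) ≤ 1 := by
          rw [← Real.exp_zero]
          apply Real.exp_le_exp.mpr
          nlinarith
        nlinarith
      · intro η hη
        have hcont : ContinuousAt (fun s : ℝ => x0in * Real.exp (-(f 0 + g 0) * s)) t := by
          fun_prop
        obtain ⟨δ', hδ', hδ'prop⟩ := Metric.continuousAt_iff.mp hcont η hη
        refine ⟨min (δ'/2) t, lt_min (by linarith) ht, min_le_right _ _, ?_⟩
        filter_upwards [self_mem_nhdsWithin] with ε (hε : ε ∈ Set.Ioi 0)
        intro s hs1 hs2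
        have hmin1 : min (δ'/2) t ≤ δ'/2 := min_le_left _ _
        have hmin2 : min (δ'/2) t ≤ t := min_le_right _ _
        have hs0 : 0 ≤ s := by linarith
        rw [hx0 ε hε s hs0]
        have hdist : dist s t < δ' := by
          rw [Real.dist_eq, abs_lt]
          constructor <;> linarith
        have hcl := hδ'prop hdist
        rw [Real.dist_eq] at hcl
        have hL0 : L 0 = x0in * Real.exp (-(f 0 + g 0) * t) := by
          rw [hLdef]; simp [hlamdef]
        rw [hL0]
        exact hcl.le
    | succ i ih =>
      intro hsucc
      have hid : i ≤ d := le_trans (Nat.le_succ i) hsucc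
      obtain ⟨⟨C, hC0, hCb⟩, hA⟩ := ih hid
      have hi1d : 1 ≤ i + 1 := Nat.succ_le_succ (Nat.zero_le i)
      have hapos : 0 < f (i+1) + g (i+1) := hfg (i+1) hi1d hsucc
      have hbnn : 0 ≤ f i := hf i (by omega)
      set a := f (i+1) + g (i+1) with hadef
      set b := f i with hbdef
      set r := b / a with hrdef
      have hrnn : 0 ≤ r := div_nonneg hbnn hapos.le
      have hz : ∀ ε : ℝ, 0 < ε → ∀ s : ℝ, 0 ≤ s →
          HasDerivAt (fun u => x ε u (i+1)) ((1/ε) * (b * x ε s i - a * x ε s (i+1))) s := by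
        intro ε hε s hs
        have := hfast ε hε s hs (i+1) hi1d hsucc
        simpa using this
      have hinit' : ∀ ε : ℝ, 0 < ε → x ε 0 (i+1) = xin (i+1) :=
        fun ε hε => hinit ε hε (i+1) hi1d hsucc
      have hLsucc : L (i+1) = r * L i := by
        rw [hLdef]; simp only
        rw [Finset.prod_range_succ, hrdef, hadef, hbdef]; ring
      constructor
      · -- uniform boundedness
        refine ⟨|xin (i+1)| + r * (C * 1 + C), by positivity, ?_⟩
        intro ε hε s hs0 hst
        rcases eq_or_lt_of_le hs0 with heq | hslt
        · rw [← heq, hinit' ε hε]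
          have : 0 ≤ r * (C*1 + C) := by positivity
          linarith [le_abs_self (xin (i+1)), neg_abs_le (xin (i+1))]
        · have hfe := fast_est hapos hbnn hε
            (fun u hu => hcontx ε hε i hid u hu) (hz ε hε)
            (s := s) (δ := 0) (D := C) (L := 0) (η := C)
            hslt le_rfl hslt.le
            (fun u hu0 hus => by
              rw [sub_zero]; exact hCb ε hε u hu0 (le_trans hus hst))
            (fun u hu1 hu2 => by
              rw [sub_zero]
              exact hCb ε hε u (by linarith) (le_trans hu2 hst))
          rw [mul_zero, sub_zero, sub_zero, hinit' ε hε] at hfe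
          have hexp1 : Real.exp (-(a/ε)*0) = 1 := by rw [mul_zero, Real.exp_zero]
          rw [hexp1, ← hrdef] at hfe
          have hexps : Real.exp (-(a/ε)*s) ≤ 1 := by
            rw [← Real.exp_zero]
            apply Real.exp_le_exp.mpr
            have : 0 < a/ε := div_pos hapos hε
            nlinarith
          have hexppos : 0 < Real.exp (-(a/ε)*s) := Real.exp_pos _
          nlinarith [abs_nonneg (xin (i+1)),
            mul_le_mul_of_nonneg_right hexps (abs_nonneg (xin (i+1)))]
      · -- local-uniform convergence near t
        intro η hη
        have hη' : 0 < η / (3*(r+1)) := by positivity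
        obtain ⟨δ₁, hδ₁pos, hδ₁t, hEv⟩ := hA (η / (3*(r+1))) hη'
        set K1 := |xin (i+1) - r * L i| with hK1def
        have hK1nn : 0 ≤ K1 := abs_nonneg _
        set D' := C + |L i| with hD'def
        have hD'nn : 0 ≤ D' := by positivity
        have ev1 := (exp_vanish hapos (half_pos ht)).eventually_lt_const
          (show (0:ℝ) < η/(3*(K1+1)) by positivity)
        have ev2 := (exp_vanish hapos (show (0:ℝ) < δ₁/2 by linarith)).eventually_lt_const
          (show (0:ℝ) < η/(3*(r*D'+1)) by positivity)
        refine ⟨δ₁/2, by linarith, by linarith, ?_⟩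
        filter_upwards [hEv, ev1, ev2, self_mem_nhdsWithin]
          with ε hAi h1 h2 (hε : ε ∈ Set.Ioi 0)
        intro s hs1 hs2
        have hε' : (0:ℝ) < ε := hε
        have hts : t/2 ≤ s := by linarith
        have hspos : 0 < s := by linarith
        have hδs : δ₁/2 ≤ s := by linarith
        have hfe := fast_est hapos hbnn hε'
          (fun u hu => hcontx ε hε' i hid u hu) (hz ε hε')
          (s := s) (δ := δ₁/2) (D := D') (L := L i) (η := η/(3*(r+1)))
          hspos (by linarith) hδs
          (fun u hu0 hus => by
            rw [hD'def]
            have hxb := hCb ε hε' u hu0 (le_trans hus hs2)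
            have habs : |x ε u i - L i| ≤ |x ε u i| + |L i| := abs_sub _ _
            linarith)
          (fun u hu1 hu2 => hAi u (by linarith) (by linarith))
        rw [hinit' ε hε', ← hrdef, ← hK1def] at hfe
        -- bound the three error terms
        have hρpos : 0 < a/ε := div_pos hapos hε'
        have hEs : Real.exp (-(a/ε)*s) ≤ Real.exp (-(a/ε)*(t/2)) := by
          apply Real.exp_le_exp.mpr
          nlinarith
        have hb1 : Real.exp (-(a/ε)*s) * K1 ≤ η/3 := by
          have s1 : Real.exp (-(a/ε)*s) * K1 ≤ Real.exp (-(a/ε)*(t/2)) * K1 :=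
            mul_le_mul_of_nonneg_right hEs hK1nn
          have s2 : Real.exp (-(a/ε)*(t/2)) * K1 ≤ (η/(3*(K1+1))) * K1 :=
            mul_le_mul_of_nonneg_right h1.le hK1nn
          have s3 : (η/(3*(K1+1))) * K1 ≤ η/3 := by
            rw [mul_comm]; exact small_aux hK1nn hη
          linarith
        have hb2 : r * (D' * Real.exp (-(a/ε)*(δ₁/2))) ≤ η/3 := by
          have hrD : 0 ≤ r * D' := mul_nonneg hrnn hD'nn
          have s1 : (r*D') * Real.exp (-(a/ε)*(δ₁/2)) ≤ (r*D') * (η/(3*(r*D'+1))) :=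
            mul_le_mul_of_nonneg_left h2.le hrD
          have s2 : (r*D') * (η/(3*(r*D'+1))) ≤ η/3 := small_aux hrD hη
          calc r * (D' * Real.exp (-(a/ε)*(δ₁/2)))
              = (r*D') * Real.exp (-(a/ε)*(δ₁/2)) := by ring
            _ ≤ η/3 := le_trans s1 s2
        have hb3 : r * (η/(3*(r+1))) ≤ η/3 := small_aux hrnn hη
        have hexpand : r * (D' * Real.exp (-(a/ε)*(δ₁/2)) + η/(3*(r+1)))
            = r * (D' * Real.exp (-(a/ε)*(δ₁/2))) + r * (η/(3*(r+1))) := by ring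
        rw [hexpand] at hfe
        rw [hLsucc]
        linarith
  -- convergence of the means at time t
  have hlim : ∀ i, i ≤ d → Tendsto (fun ε => x ε t i)
      (nhdsWithin (0:ℝ) (Set.Ioi 0)) (nhds (L i)) := by
    intro i hid
    have hA := (key i hid).2
    rw [Metric.tendsto_nhds]
    intro η hη
    obtain ⟨δ, hδpos, hδt, hEv⟩ := hA (η/2) (half_pos hη)
    filter_upwards [hEv] with ε hev
    have := hev t (by linarith) le_rfl
    rw [Real.dist_eq]
    linarith
  constructor
  · -- part 1: scaled quiescent population
    intro h hcont hbd
    obtain ⟨C, hC⟩ := hbd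
    have hmain := lemA hlampos hcont hC
    refine Tendsto.congr' ?_ hmain
    filter_upwards [self_mem_nhdsWithin] with ε (hε : ε ∈ Set.Ioi 0)
    have hε' : (0:ℝ) < ε := hε
    haveI := hprob ε hε'
    have heq := int_eq_tsum (μ ε) (Z0 ε) (hmeas0 ε hε')
        (fun n => Real.exp (-(x ε t 0 / ε)) * (x ε t 0 / ε) ^ n / n.factorial)
        (fun n => by rw [hx0 ε hε' t ht.le]; positivity)
        (hlaw0 ε hε') (fun n => h (ε * n)) C (fun n => hC _)
    rw [heq]
    apply tsum_congr
    intro n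
    rw [hx0 ε hε' t ht.le, ← hlamdef]
    simp only [pois]
    ring
  · -- part 2: growing compartments
    intro i hi1 hid h hcont hbd
    obtain ⟨C, hC⟩ := hbd
    have hmain := lemBp hcont hC (hlim i hid)
    have hpois_nn : ∀ n : ℕ, 0 ≤ pois (L i) n := by
      intro n
      have hLi0 := hLnn i hid
      unfold pois
      positivity
    have hpt : (∑' n : ℕ, poisp (L i) n * h n) = ∑' n : ℕ,
        (Real.exp (-((∏ j ∈ Finset.range i, f j / (f (j + 1) + g (j + 1))) * lam))
          * ((∏ j ∈ Finset.range i, f j / (f (j + 1) + g (j + 1))) * lam) ^ n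
            / n.factorial) * h n := by
      apply tsum_congr
      intro n
      have hLi : L i = (∏ j ∈ Finset.range i, f j / (f (j + 1) + g (j + 1))) * lam := by
        rw [hLdef]
      simp only [poisp]
      rw [max_eq_left (hpois_nn n)]
      simp only [pois]
      rw [← hLi]
      ring
    rw [hpt] at hmain
    refine Tendsto.congr' ?_ hmain
    filter_upwards [self_mem_nhdsWithin] with ε (hε : ε ∈ Set.Ioi 0)
    have hε' : (0:ℝ) < ε := hε
    haveI := hprob ε hε'
    have heq := int_eq_tsum (μ ε) (X i ε) (hmeas i hi1 hid ε hε')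
        (fun n => max (Real.exp (-(x ε t i)) * (x ε t i) ^ n / n.factorial) 0)
        (fun n => le_max_right _ _)
        (fun n => by
          show (μ ε) {ω | X i ε ω = n}
            = ENNReal.ofReal (max (Real.exp (-(x ε t i)) * (x ε t i) ^ n / (n.factorial : ℝ)) 0)
          rw [hlaw i hi1 hid ε hε' n]
          rcases le_total (Real.exp (-(x ε t i)) * (x ε t i) ^ n / n.factorial) 0 with hh | hh
          · rw [max_eq_right hh, ENNReal.ofReal_zero, ENNReal.ofReal_of_nonpos hh]
          · rw [max_eq_left hh])
        (fun n => h n) C (fun n => hC _)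
    rw [heq]
    apply tsum_congr
    intro n
    simp only [poisp, pois]
    rw [← mul_div_assoc]
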